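/- Let G be a finite simple graph, let C ⊆ V(G) be a vertex cover of G, and let S = V(G) \ C. If a finite simple graph H is a minor of G, then there exists S' ⊆ S with |S'| ≤ |V(H)| + |C| · (Δ(H) + 1) such that H is a minor of the induced subgraph G[C ∪ S'], where Δ(H) denotes the maximum degree of H. -/

import Mathlib

/-- An `H`-model in `G`: branch sets `φ v ⊆ V(G)` inducing connected subgraphs,
pairwise disjoint, with an edge of `G` between the branch sets of adjacent vertices of `H`. -/
def IsMinorModel {V W : Type*} (G : SimpleGraph V) (H : SimpleGraph W)
    (φ : W → Set V) : Prop :=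
  (∀ v : W, (G.induce (φ v)).Connected) ∧
  (∀ u v : W, H.Adj u v → ∃ u' ∈ φ u, ∃ v' ∈ φ v, G.Adj u' v') ∧
  (∀ u v : W, u ≠ v → Disjoint (φ u) (φ v))

/-- `H` is a minor of `G` (`H ⪯ G`) if an `H`-model in `G` exists. -/
def IsMinorOf {V W : Type*} (H : SimpleGraph W) (G : SimpleGraph V) : Prop :=
  ∃ φ : W → Set V, IsMinorModel G H φ

section Helpers

open SimpleGraph

set_option linter.unusedSectionVars false

variable {V : Type*} {G : SimpleGraph V}

lemma induce_singleton_connected (G : SimpleGraph V) (x : V) : (G.induce {x}).Connected := by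
  have h := (Subgraph.singletonSubgraph_connected (G := G) (v := x)).induce_verts
  simpa using h

lemma exists_walk_in {B : Set V} (h : (G.induce B).Connected) {x y : V}
    (hx : x ∈ B) (hy : y ∈ B) : ∃ p : G.Walk x y, ∀ z ∈ p.support, z ∈ B := by
  rw [connected_induce_iff, Subgraph.connected_iff_forall_exists_walk_subgraph] at h
  obtain ⟨p, hp⟩ := h.2 (by simpa using hx) (by simpa using hy)
  refine ⟨p, fun z hz => ?_⟩
  have := hp.1 (p.mem_verts_toSubgraph.2 hz)
  simpa using this

lemma induce_induce_connected {A B : Set V} (hBA : B ⊆ A) (h : (G.induce B).Connected) :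
    ((G.induce A).induce ((↑) ⁻¹' B : Set ↥A)).Connected := by
  let e : ↥((↑) ⁻¹' B : Set ↥A) ≃ ↥B :=
    Equiv.subtypeSubtypeEquivSubtype (fun {x} hx => hBA hx)
  refine (Iso.connected_iff (G := G.induce B)
    (H := (G.induce A).induce ((↑) ⁻¹' B : Set ↥A)) ⟨e.symm, ?_⟩).1 h
  intro a b
  have ha : ((e.symm a : ↥A) : V) = (a : V) := rfl
  have hb : ((e.symm b : ↥A) : V) = (b : V) := rfl
  rw [comap_adj, comap_adj, comap_adj, Function.Embedding.coe_subtype,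
    Function.Embedding.coe_subtype, Function.Embedding.coe_subtype, ha, hb]

variable [Fintype V]

lemma sing_ncard_mem {C : Set V} {x : V} (hx : x ∈ C) : (({x} : Set V) ∩ Cᶜ).ncard = 0 := by
  have : ({x} : Set V) ∩ Cᶜ = ∅ := by ext w; simp; rintro rfl; simpa using hx
  simp [this]

lemma sing_ncard_not_mem {C : Set V} {x : V} (hx : x ∉ C) : (({x} : Set V) ∩ Cᶜ).ncard = 1 := by
  have : ({x} : Set V) ∩ Cᶜ = {x} := by ext w; simp; rintro rfl; simpa using hx
  simp [this]

lemma lemB (C : Set V) (hC : ∀ ⦃u v : V⦄, G.Adj u v → u ∈ C ∨ v ∈ C)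
    (D : Set V) {x y : V} (p : G.Walk x y) (hp : p.IsPath)
    (hx : x ∉ D) (hy : y ∈ D) :
    ∃ P : Set V, (∀ z ∈ P, z ∈ p.support) ∧ x ∈ P ∧ Disjoint P D ∧
      ((G.induce D).Connected → (G.induce (D ∪ P)).Connected) ∧
      (P ∩ Cᶜ).ncard ≤ (P ∩ C).ncard + (({x} : Set V) ∩ Cᶜ).ncard := by
  induction p with
  | nil => exact absurd hy hx
  | @cons x z y h q ih =>
    rw [Walk.cons_isPath_iff] at hp
    by_cases hzD : z ∈ D
    · refine ⟨{x}, by simp, rfl, by simpa using hx, ?_, ?_⟩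
      · intro hD
        exact connected_induce_union hD.preconnected (induce_singleton_connected G x).preconnected hzD rfl h.symm
      · exact Nat.le_add_left _ _
    · obtain ⟨P₀, hP₀supp, hzP₀, hP₀D, hP₀conn, hP₀card⟩ := ih hp.1 hzD hy
      have hxP₀ : x ∉ P₀ := fun hxx => hp.2 (hP₀supp x hxx)
      refine ⟨insert x P₀, ?_, Set.mem_insert _ _, ?_, ?_, ?_⟩
      · intro w hw
        rcases hw with rfl | hw
        · exact Walk.start_mem_support _
        · exact List.mem_cons_of_mem _ (hP₀supp w hw)
      · rw [Set.disjoint_left]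
        rintro w (rfl | hw)
        · exact hx
        · exact fun hwD => (Set.disjoint_left.1 hP₀D) hw hwD
      · intro hD
        have h1 : (G.induce (D ∪ P₀)).Connected := hP₀conn hD
        have h2 : (G.induce ((D ∪ P₀) ∪ {x})).Connected :=
          connected_induce_union h1.preconnected (induce_singleton_connected G x).preconnected
            (Or.inr hzP₀) rfl h.symm
        have hset : (D ∪ P₀) ∪ ({x} : Set V) = D ∪ insert x P₀ := by
          ext w; simp only [Set.mem_union, Set.mem_singleton_iff, Set.mem_insert_iff]; tauto
        rwa [hset] at h2
      · have hCC : x ∈ C ∨ z ∈ C := hC h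
        by_cases hxC : x ∈ C
        · have e1 : insert x P₀ ∩ Cᶜ = P₀ ∩ Cᶜ :=
            Set.insert_inter_of_notMem (by simpa using hxC)
          have e2 : (insert x P₀ ∩ C).ncard = (insert x (P₀ ∩ C)).ncard := by
            rw [Set.insert_inter_of_mem hxC]
          have e3 : (insert x (P₀ ∩ C)).ncard = (P₀ ∩ C).ncard + 1 :=
            Set.ncard_insert_of_notMem (fun hh => hxP₀ hh.1) (Set.toFinite _)
          have hxs := sing_ncard_mem (C := C) hxC
          rw [e1, e2, e3, hxs]
          have hz1 : (({z} : Set V) ∩ Cᶜ).ncard ≤ 1 := by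
            by_cases hzC : z ∈ C
            · rw [sing_ncard_mem hzC]; omega
            · rw [sing_ncard_not_mem hzC]
          omega
        · have hzC : z ∈ C := hCC.resolve_left hxC
          have e1 : (insert x P₀ ∩ Cᶜ).ncard = (insert x (P₀ ∩ Cᶜ)).ncard := by
            rw [Set.insert_inter_of_mem (by simpa using hxC)]
          have e2 : insert x P₀ ∩ C = P₀ ∩ C :=
            Set.insert_inter_of_notMem hxC
          have e3 : (insert x (P₀ ∩ Cᶜ)).ncard = (P₀ ∩ Cᶜ).ncard + 1 :=
            Set.ncard_insert_of_notMem (fun hh => hxP₀ hh.1) (Set.toFinite _)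
          rw [e1, e2, e3, sing_ncard_not_mem hxC]
          rw [sing_ncard_mem hzC] at hP₀card
          omega

lemma lemA (C : Set V) (hC : ∀ ⦃u v : V⦄, G.Adj u v → u ∈ C ∨ v ∈ C)
    {B : Set V} (hB : (G.induce B).Connected) {x₀ : V} (hx₀ : x₀ ∈ B)
    (X : Finset V) (hX : ↑X ⊆ B) :
    ∃ B' : Set V, B' ⊆ B ∧ insert x₀ (↑X : Set V) ⊆ B' ∧ (G.induce B').Connected ∧
      (B' ∩ Cᶜ).ncard ≤ ((insert x₀ (↑X : Set V)) ∩ Cᶜ).ncard + (B' ∩ C).ncard := by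
  classical
  induction X using Finset.induction with
  | empty =>
    refine ⟨{x₀}, by simpa using hx₀, by simp, induce_singleton_connected G x₀, ?_⟩
    simp
  | @insert a X₀ ha ih =>
    obtain ⟨B₀, hB₀B, hB₀X, hB₀conn, hB₀card⟩ := ih (by
      intro w hw; exact hX (by simp [hw]))
    by_cases haB₀ : a ∈ B₀
    · refine ⟨B₀, hB₀B, ?_, hB₀conn, ?_⟩
      · intro w hw
        rcases hw with rfl | hw
        · exact hB₀X (Set.mem_insert _ _)
        · simp only [Finset.coe_insert, Set.mem_insert_iff, Finset.mem_coe] at hw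
          rcases hw with rfl | hw
          · exact haB₀
          · exact hB₀X (Set.mem_insert_of_mem _ hw)
      · refine le_trans hB₀card (Nat.add_le_add_right (Set.ncard_le_ncard ?_ (Set.toFinite _)) _)
        intro w hw
        refine ⟨?_, hw.2⟩
        rcases hw.1 with rfl | hw1
        · exact Set.mem_insert _ _
        · exact Set.mem_insert_of_mem _ (by simp [hw1])
    · have haB : a ∈ B := hX (by simp)
      obtain ⟨p, hpsupp⟩ := exists_walk_in hB haB hx₀
      obtain ⟨P, hPsupp, haP, hPD, hPconn, hPcard⟩ :=
        lemB C hC B₀ p.toPath.1 p.toPath.2 haB₀ (hB₀X (Set.mem_insert _ _))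
      refine ⟨B₀ ∪ P, ?_, ?_, hPconn hB₀conn, ?_⟩
      · rintro w (hw | hw)
        · exact hB₀B hw
        · exact hpsupp w (p.support_toPath_subset (hPsupp w hw))
      · intro w hw
        rcases hw with rfl | hw
        · exact Or.inl (hB₀X (Set.mem_insert _ _))
        · simp only [Finset.coe_insert, Set.mem_insert_iff, Finset.mem_coe] at hw
          rcases hw with rfl | hw
          · exact Or.inr haP
          · exact Or.inl (hB₀X (Set.mem_insert_of_mem _ hw))
      · have hd : Disjoint (B₀ ∩ Cᶜ) (P ∩ Cᶜ) :=
          Set.disjoint_of_subset Set.inter_subset_left Set.inter_subset_left hPD.symm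
        have hdc : Disjoint (B₀ ∩ C) (P ∩ C) :=
          Set.disjoint_of_subset Set.inter_subset_left Set.inter_subset_left hPD.symm
        have e1 : (B₀ ∪ P) ∩ Cᶜ = (B₀ ∩ Cᶜ) ∪ (P ∩ Cᶜ) := Set.union_inter_distrib_right _ _ _
        have e2 : (B₀ ∪ P) ∩ C = (B₀ ∩ C) ∪ (P ∩ C) := Set.union_inter_distrib_right _ _ _
        rw [e1, e2, Set.ncard_union_eq hd (Set.toFinite _) (Set.toFinite _),
          Set.ncard_union_eq hdc (Set.toFinite _) (Set.toFinite _)]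
        have haX : a ∉ insert x₀ (↑X₀ : Set V) := fun hh => haB₀ (hB₀X hh)
        have etar : ((insert a (insert x₀ (↑X₀ : Set V))) ∩ Cᶜ).ncard
            = ((insert x₀ (↑X₀ : Set V)) ∩ Cᶜ).ncard + (({a} : Set V) ∩ Cᶜ).ncard := by
          by_cases haC : a ∈ C
          · rw [Set.insert_inter_of_notMem (by simpa using haC), sing_ncard_mem haC]
            omega
          · rw [Set.insert_inter_of_mem (by simpa using haC), sing_ncard_not_mem haC,
              Set.ncard_insert_of_notMem (fun hh => haX hh.1) (Set.toFinite _)]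
        have hcst : (↑(insert a X₀) : Set V) = insert a (↑X₀ : Set V) := by simp
        rw [hcst]
        have etar' : ((insert x₀ (insert a (↑X₀ : Set V))) ∩ Cᶜ).ncard
            = ((insert a (insert x₀ (↑X₀ : Set V))) ∩ Cᶜ).ncard := by
          rw [Set.insert_comm]
        rw [etar', etar]
        omega

end Helpers

section CountHelpers

variable {α : Type*} [Finite α]

lemma ncard_biUnion_le {ι : Type*} (t : Finset ι) (f : ι → Set α) :
    (⋃ i ∈ t, f i).ncard ≤ ∑ i ∈ t, (f i).ncard := by
  classical
  induction t using Finset.induction with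
  | empty => simp
  | @insert a s ha ih =>
    rw [Finset.set_biUnion_insert, Finset.sum_insert ha]
    exact le_trans (Set.ncard_union_le _ _) (Nat.add_le_add_left ih _)

lemma sum_ncard_le_of_disjoint {ι : Type*} (t : Finset ι) (f : ι → Set α)
    (hdisj : ∀ i j, i ≠ j → Disjoint (f i) (f j)) (T : Set α) (hsub : ∀ i, f i ⊆ T) :
    ∑ i ∈ t, (f i).ncard ≤ T.ncard := by
  classical
  have key : ∀ t : Finset ι, ∑ i ∈ t, (f i).ncard = (⋃ i ∈ t, f i).ncard := by
    intro t
    induction t using Finset.induction with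
    | empty => simp
    | @insert a s ha ih =>
      rw [Finset.set_biUnion_insert, Finset.sum_insert ha, ih,
        Set.ncard_union_eq ?_ (Set.toFinite _) (Set.toFinite _)]
      rw [Set.disjoint_iUnion_right]
      intro i
      rw [Set.disjoint_iUnion_right]
      intro hi
      exact hdisj a i (fun hh => ha (hh ▸ hi))
  rw [key]
  exact Set.ncard_le_ncard (by simp only [Set.iUnion_subset_iff]; exact fun i _ => hsub i)
    (Set.toFinite _)

end CountHelpers

/-- If `C` is a vertex cover of `G`, `S = V(G) \ C`, and `H` is a minor of `G`, then
there is `S' ⊆ S` with `|S'| ≤ |V(H)| + |C| · (Δ(H) + 1)` such that `H` is a minor of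
`G[C ∪ S']`, where `Δ(H) = ⨆ v, |N_H(v)|` is the maximum degree of `H`. -/
theorem stmt_15 {V W : Type*} [Fintype V] [Fintype W]
    (G : SimpleGraph V) (C : Set V)
    (hC : ∀ ⦃u v : V⦄, G.Adj u v → u ∈ C ∨ v ∈ C)
    (H : SimpleGraph W) (h : IsMinorOf H G) :
    ∃ S' ⊆ Cᶜ,
      S'.ncard ≤ Fintype.card W + C.ncard * ((⨆ v : W, (H.neighborSet v).ncard) + 1) ∧
      IsMinorOf H (G.induce (C ∪ S')) := by
  classical
  obtain ⟨φ, hconn, hedge, hdisj⟩ := h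
  set Δ := ⨆ v : W, (H.neighborSet v).ncard with hΔdef
  have hdeg : ∀ w : W, (H.neighborSet w).ncard ≤ Δ := fun w =>
    le_ciSup (f := fun v : W => (H.neighborSet v).ncard)
      (Set.Finite.bddAbove (Set.finite_range _)) w
  -- base points of branch sets
  have hptex : ∀ v : W, ∃ x, x ∈ φ v := fun v => by
    obtain ⟨⟨x, hx⟩⟩ := (hconn v).nonempty
    exact ⟨x, hx⟩
  choose pt hpt using hptex
  -- designated edges
  have hFex : ∀ e : H.edgeSet, ∃ p : V × V, G.Adj p.1 p.2 ∧
      ∀ u v : W, (e : Sym2 W) = s(u, v) →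
        (p.1 ∈ φ u ∧ p.2 ∈ φ v) ∨ (p.1 ∈ φ v ∧ p.2 ∈ φ u) := by
    rintro ⟨e, he⟩
    induction e using Sym2.ind with
    | _ u₀ v₀ =>
      have hadj : H.Adj u₀ v₀ := H.mem_edgeSet.1 he
      obtain ⟨a, ha, b, hb, hab⟩ := hedge u₀ v₀ hadj
      refine ⟨(a, b), hab, ?_⟩
      intro u v huv
      simp only [Sym2.eq_iff] at huv
      rcases huv with ⟨rfl, rfl⟩ | ⟨rfl, rfl⟩
      · exact Or.inl ⟨ha, hb⟩
      · exact Or.inr ⟨ha, hb⟩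
  choose F hF1 hF2 using hFex
  -- the X sets
  set Y : W → Set V := fun v =>
    (⋃ e : H.edgeSet, ⋃ (_ : v ∈ (e : Sym2 W)), {(F e).1, (F e).2}) ∩ φ v with hYdef
  have hYsub : ∀ v, Y v ⊆ φ v := fun v => Set.inter_subset_right
  -- shrink branch sets
  have hlemA : ∀ v : W, ∃ B' : Set V, B' ⊆ φ v ∧ insert (pt v) (Y v) ⊆ B' ∧
      (G.induce B').Connected ∧
      (B' ∩ Cᶜ).ncard ≤ ((insert (pt v) (Y v)) ∩ Cᶜ).ncard + (B' ∩ C).ncard := by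
    intro v
    obtain ⟨B', h1, h2, h3, h4⟩ := lemA C hC (hconn v) (hpt v) (Set.toFinite (Y v)).toFinset
      (by rw [Set.Finite.coe_toFinset]; exact hYsub v)
    rw [Set.Finite.coe_toFinset] at h2 h4
    exact ⟨B', h1, h2, h3, h4⟩
  choose B' hB'sub hB'X hB'conn hB'card using hlemA
  set S' : Set V := (⋃ v : W, B' v) ∩ Cᶜ with hS'def
  have hB'CS : ∀ v, B' v ⊆ C ∪ S' := by
    intro v x hx
    by_cases hxC : x ∈ C
    · exact Or.inl hxC
    · exact Or.inr ⟨Set.mem_iUnion.2 ⟨v, hx⟩, hxC⟩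
  refine ⟨S', Set.inter_subset_right, ?_, ?_⟩
  · -- cardinality bound
    have hS'eq : S' = ⋃ v : W, (B' v ∩ Cᶜ) := by
      rw [hS'def, Set.iUnion_inter]
    have h1 : S'.ncard ≤ ∑ v : W, (B' v ∩ Cᶜ).ncard := by
      rw [hS'eq]
      have := ncard_biUnion_le (Finset.univ : Finset W) (fun v => B' v ∩ Cᶜ)
      simpa using this
    have h2 : ∑ v : W, (B' v ∩ Cᶜ).ncard ≤
        ∑ v : W, (((insert (pt v) (Y v)) ∩ Cᶜ).ncard + (B' v ∩ C).ncard) :=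
      Finset.sum_le_sum (fun v _ => hB'card v)
    have h3 : ∑ v : W, (B' v ∩ C).ncard ≤ C.ncard := by
      refine sum_ncard_le_of_disjoint _ _ ?_ C (fun v => Set.inter_subset_right)
      intro i j hij
      exact Set.disjoint_of_subset
        (le_trans Set.inter_subset_left (hB'sub i))
        (le_trans Set.inter_subset_left (hB'sub j)) (hdisj i j hij)
    have h4 : ∀ v : W, ((insert (pt v) (Y v)) ∩ Cᶜ).ncard ≤ 1 + (Y v ∩ Cᶜ).ncard := by
      intro v
      have hsub : (insert (pt v) (Y v)) ∩ Cᶜ ⊆ {pt v} ∪ (Y v ∩ Cᶜ) := by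
        rintro w ⟨hw1, hw2⟩
        rcases hw1 with rfl | hw1
        · exact Or.inl rfl
        · exact Or.inr ⟨hw1, hw2⟩
      refine le_trans (Set.ncard_le_ncard hsub (Set.toFinite _)) ?_
      refine le_trans (Set.ncard_union_le _ _) ?_
      simp
    set Z : Set V := ⋃ e : H.edgeSet, ({(F e).1, (F e).2} ∩ Cᶜ) with hZdef
    have h5 : ∑ v : W, (Y v ∩ Cᶜ).ncard ≤ Z.ncard := by
      refine sum_ncard_le_of_disjoint _ _ ?_ Z ?_
      · intro i j hij
        exact Set.disjoint_of_subset
          (le_trans Set.inter_subset_left (hYsub i))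
          (le_trans Set.inter_subset_left (hYsub j)) (hdisj i j hij)
      · intro v w hw
        obtain ⟨⟨hw1, _⟩, hw2⟩ := hw
        simp only [Set.mem_iUnion] at hw1
        obtain ⟨e, _, hw3⟩ := hw1
        exact Set.mem_iUnion.2 ⟨e, hw3, hw2⟩
    have h6 : Z.ncard ≤ Fintype.card H.edgeSet := by
      have hz1 : Z = ⋃ e ∈ (Finset.univ : Finset H.edgeSet), ({(F e).1, (F e).2} ∩ Cᶜ) := by
        simp [hZdef]
      rw [hz1]
      refine le_trans (ncard_biUnion_le _ _) ?_
      have hone : ∀ e : H.edgeSet, (({(F e).1, (F e).2} : Set V) ∩ Cᶜ).ncard ≤ 1 := by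
        intro e
        rcases hC (hF1 e) with hc | hc
        · refine le_trans (Set.ncard_le_ncard (t := {(F e).2}) ?_ (Set.toFinite _)) (by simp)
          rintro w ⟨hw1, hw2⟩
          rcases hw1 with rfl | rfl
          · exact absurd hc hw2
          · rfl
        · refine le_trans (Set.ncard_le_ncard (t := {(F e).1}) ?_ (Set.toFinite _)) (by simp)
          rintro w ⟨hw1, hw2⟩
          rcases hw1 with rfl | rfl
          · rfl
          · exact absurd hc hw2
      refine le_trans (Finset.sum_le_sum (fun e _ => hone e)) (by simp)
    -- the key edge count
    have h7 : Fintype.card H.edgeSet ≤ C.ncard * Δ := by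
      have hcex : ∀ e : H.edgeSet, ∃ cc : V, cc ∈ C ∧ (cc = (F e).1 ∨ cc = (F e).2) := by
        intro e
        rcases hC (hF1 e) with hc | hc
        · exact ⟨(F e).1, hc, Or.inl rfl⟩
        · exact ⟨(F e).2, hc, Or.inr rfl⟩
      choose cE hcC hcF using hcex
      have claim3 : ∀ (e : H.edgeSet) (x : V), (x = (F e).1 ∨ x = (F e).2) →
          ∃ w : W, w ∈ (e : Sym2 W) ∧ x ∈ φ w := by
        rintro ⟨e, he⟩ x hx
        induction e using Sym2.ind with
        | _ u₀ v₀ =>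
          rcases hF2 ⟨s(u₀, v₀), he⟩ u₀ v₀ rfl with ⟨h1, h2⟩ | ⟨h1, h2⟩ <;>
            rcases hx with rfl | rfl
          · exact ⟨u₀, Sym2.mem_mk_left _ _, h1⟩
          · exact ⟨v₀, Sym2.mem_mk_right _ _, h2⟩
          · exact ⟨v₀, Sym2.mem_mk_right _ _, h1⟩
          · exact ⟨u₀, Sym2.mem_mk_left _ _, h2⟩
      have hwex : ∀ e : H.edgeSet, ∃ w : W, w ∈ (e : Sym2 W) ∧ cE e ∈ φ w :=
        fun e => claim3 e (cE e) (hcF e)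
      choose wE hwE1 hwE2 using hwex
      have hcount := Finset.card_le_mul_card_image (f := cE)
        (Finset.univ : Finset H.edgeSet) Δ ?_
      · have himg : (Finset.univ.image cE).card ≤ C.ncard := by
          rw [Set.ncard_eq_toFinset_card' C]
          refine Finset.card_le_card ?_
          intro b hb
          obtain ⟨e, _, rfl⟩ := Finset.mem_image.1 hb
          simpa using hcC e
        calc Fintype.card H.edgeSet = (Finset.univ : Finset H.edgeSet).card :=
              (Finset.card_univ).symm
          _ ≤ Δ * (Finset.univ.image cE).card := hcount
          _ ≤ Δ * C.ncard := Nat.mul_le_mul_left _ himg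
          _ = C.ncard * Δ := Nat.mul_comm _ _
      · -- fiber bound
        intro b hb
        obtain ⟨e₁, _, he₁⟩ := Finset.mem_image.1 hb
        set w₁ := wE e₁ with hw₁def
        have hbw₁ : b ∈ φ w₁ := he₁ ▸ hwE2 e₁
        have hmem : ∀ e : H.edgeSet, cE e = b → w₁ ∈ (e : Sym2 W) := by
          intro e he
          have hb2 : b ∈ φ (wE e) := he ▸ hwE2 e
          have : wE e = w₁ := by
            by_contra hne
            exact (Set.disjoint_left.1 (hdisj _ _ hne)) hb2 hbw₁
          exact this ▸ hwE1 e
        set g : H.edgeSet → W := fun e =>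
          if hh : w₁ ∈ (e : Sym2 W) then Sym2.Mem.other' hh else w₁ with hgdef
        have hginj : Set.InjOn g (Finset.univ.filter (fun x => cE x = b) : Finset H.edgeSet) := by
          intro e he e' he' hgg
          simp only [Finset.coe_filter, Set.mem_setOf_eq, Finset.mem_univ, true_and] at he he'
          have h1 := hmem e he
          have h2 := hmem e' he'
          rw [hgdef] at hgg
          simp only [h1, h2, dif_pos] at hgg
          have := Sym2.other_spec' h1
          rw [hgg, Sym2.other_spec' h2] at this
          exact (Subtype.ext this).symm
        have hgmaps : ∀ e ∈ (Finset.univ.filter (fun x => cE x = b) : Finset H.edgeSet),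
            g e ∈ (Set.toFinite (H.neighborSet w₁)).toFinset := by
          intro e he
          simp only [Finset.mem_filter] at he
          have h1 := hmem e he.2
          rw [Set.Finite.mem_toFinset]
          have hspec := Sym2.other_spec' h1
          have : H.Adj w₁ (Sym2.Mem.other' h1) := by
            rw [← H.mem_edgeSet, hspec]
            exact e.2
          simpa [hgdef, h1] using this
        have := Finset.card_le_card_of_injOn g hgmaps hginj
        refine le_trans this ?_
        rw [← Set.ncard_eq_toFinset_card]
        exact hdeg w₁
    -- put it together
    have hW : ∑ _v : W, 1 = Fintype.card W := by simp
    have h45 : ∑ v : W, ((insert (pt v) (Y v)) ∩ Cᶜ).ncard ≤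
        Fintype.card W + ∑ v : W, (Y v ∩ Cᶜ).ncard := by
      calc ∑ v : W, ((insert (pt v) (Y v)) ∩ Cᶜ).ncard
          ≤ ∑ v : W, (1 + (Y v ∩ Cᶜ).ncard) := Finset.sum_le_sum (fun v _ => h4 v)
        _ = Fintype.card W + ∑ v : W, (Y v ∩ Cᶜ).ncard := by
            rw [Finset.sum_add_distrib, hW]
    rw [Finset.sum_add_distrib] at h2
    have hfin := le_trans h5 (le_trans h6 h7)
    show S'.ncard ≤ Fintype.card W + C.ncard * (Δ + 1)
    have hmul : C.ncard * (Δ + 1) = C.ncard * Δ + C.ncard := by ring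
    rw [hmul]
    omega
  · -- the minor model
    refine ⟨fun v => ((↑) ⁻¹' (B' v) : Set ↥(C ∪ S')), ?_, ?_, ?_⟩
    · intro v
      exact induce_induce_connected (hB'CS v) (hB'conn v)
    · intro u v huv
      set e : H.edgeSet := ⟨s(u, v), H.mem_edgeSet.2 huv⟩ with hedef
      have hue : u ∈ (e : Sym2 W) := Sym2.mem_mk_left _ _
      have hve : v ∈ (e : Sym2 W) := Sym2.mem_mk_right _ _
      have hYmem : ∀ (w : W) (x : V), w ∈ (e : Sym2 W) →
          (x = (F e).1 ∨ x = (F e).2) → x ∈ φ w → x ∈ B' w := by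
        intro w x hwe hxe hxφ
        refine hB'X w (Set.mem_insert_of_mem _ ?_)
        refine ⟨?_, hxφ⟩
        refine Set.mem_iUnion.2 ⟨e, Set.mem_iUnion.2 ⟨hwe, ?_⟩⟩
        rcases hxe with rfl | rfl
        · exact Or.inl rfl
        · exact Or.inr rfl
      rcases hF2 e u v rfl with ⟨h1, h2⟩ | ⟨h1, h2⟩
      · have hu' : (F e).1 ∈ B' u := hYmem u _ hue (Or.inl rfl) h1
        have hv' : (F e).2 ∈ B' v := hYmem v _ hve (Or.inr rfl) h2
        exact ⟨⟨(F e).1, hB'CS u hu'⟩, hu', ⟨(F e).2, hB'CS v hv'⟩, hv', hF1 e⟩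
      · have hu' : (F e).2 ∈ B' u := hYmem u _ hue (Or.inr rfl) h2
        have hv' : (F e).1 ∈ B' v := hYmem v _ hve (Or.inl rfl) h1
        exact ⟨⟨(F e).2, hB'CS u hu'⟩, hu', ⟨(F e).1, hB'CS v hv'⟩, hv', (hF1 e).symm⟩
    · intro u v huv
      exact Disjoint.preimage _
        (Set.disjoint_of_subset (hB'sub u) (hB'sub v) (hdisj u v huv))
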